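/- For R > 0 let â(v) := √(R² - v²) for 0 ≤ v ≤ R, and define C(R) := (2/π) ∫₀^{R} erfc(√2 · v) · v · e^{v²} · [ e^{-(â(v) - R)²} - e^{-(â(v) + R)²} + √π · (â(v) - R) · erf(â(v) - R) - √π · (â(v) + R) · erf(â(v) + R) ] dv. Then lim_{R→∞} C(R)/R = -(2√2 - 2)/√π. (C(R) is the covariance between the numbers of complex and real eigenvalues of the infinite real Ginibre ensemble in the centred disc of radius R, and the limit gives its linear asymptotic growth.) -/

import Mathlib

open MeasureTheory Real Filter Set Topology

/-- The error function `erf(x) = (2/√π) ∫₀^x e^(-t²) dt`. -/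
noncomputable def erf (x : ℝ) : ℝ := (2 / Real.sqrt π) * ∫ t in (0:ℝ)..x, Real.exp (-t ^ 2)

/-- The complementary error function `erfc(x) = 1 - erf(x)`. -/
noncomputable def erfc (x : ℝ) : ℝ := 1 - erf x

/-- The covariance between the numbers of complex and real eigenvalues of the infinite
real Ginibre ensemble in the centred disc of radius `R`, with `â(v) = √(R² - v²)`. -/
noncomputable def covGinOE (R : ℝ) : ℝ :=
  (2 / π) * ∫ v in (0:ℝ)..R,
    erfc (Real.sqrt 2 * v) * v * Real.exp (v ^ 2) *
      (Real.exp (-(Real.sqrt (R ^ 2 - v ^ 2) - R) ^ 2)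
        - Real.exp (-(Real.sqrt (R ^ 2 - v ^ 2) + R) ^ 2)
        + Real.sqrt π * (Real.sqrt (R ^ 2 - v ^ 2) - R) * erf (Real.sqrt (R ^ 2 - v ^ 2) - R)
        - Real.sqrt π * (Real.sqrt (R ^ 2 - v ^ 2) + R) * erf (Real.sqrt (R ^ 2 - v ^ 2) + R))

lemma gauss_integrable : Integrable (fun t : ℝ => Real.exp (-t ^ 2)) := by
  simpa using integrable_exp_neg_mul_sq one_pos

lemma gauss_Ioi : ∫ t in Set.Ioi (0:ℝ), Real.exp (-t ^ 2) = Real.sqrt π / 2 := by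
  simpa using integral_gaussian_Ioi 1

lemma gauss_total : ∫ t : ℝ, Real.exp (-t ^ 2) = Real.sqrt π := by
  simpa using integral_gaussian 1

lemma sqrt_pi_pos : 0 < Real.sqrt π := Real.sqrt_pos.mpr pi_pos

lemma continuous_erf : Continuous erf :=
  continuous_const.mul (gauss_integrable.continuous_primitive 0)

lemma erf_zero : erf 0 = 0 := by simp [erf]

lemma hasDerivAt_erf (x : ℝ) :
    HasDerivAt erf ((2 / Real.sqrt π) * Real.exp (-x ^ 2)) x := by
  have hc : Continuous fun t : ℝ => Real.exp (-t ^ 2) := by continuity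
  have h : HasDerivAt (fun y => ∫ t in (0:ℝ)..y, Real.exp (-t ^ 2)) (Real.exp (-x ^ 2)) x :=
    intervalIntegral.integral_hasDerivAt_right gauss_integrable.intervalIntegrable
      (hc.stronglyMeasurableAtFilter _ _) hc.continuousAt
  exact h.const_mul (2 / Real.sqrt π)

lemma erf_tendsto_one : Tendsto erf atTop (𝓝 1) := by
  have h := (intervalIntegral_tendsto_integral_Ioi 0 gauss_integrable.integrableOn
      tendsto_id).const_mul (2 / Real.sqrt π)
  rw [gauss_Ioi] at h
  have hval : (2 / Real.sqrt π) * (Real.sqrt π / 2) = 1 := by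
    field_simp
  rw [hval] at h
  exact h

lemma abs_erf_le_two (x : ℝ) : |erf x| ≤ 2 := by
  have key : ∀ a b : ℝ, a ≤ b → |∫ t in a..b, Real.exp (-t ^ 2)| ≤ Real.sqrt π := by
    intro a b hab
    rw [intervalIntegral.integral_of_le hab, abs_of_nonneg
      (setIntegral_nonneg measurableSet_Ioc fun t _ => (exp_pos _).le)]
    rw [← gauss_total]
    exact setIntegral_le_integral gauss_integrable
      (Eventually.of_forall fun t => (exp_pos _).le)
  have habs : |∫ t in (0:ℝ)..x, Real.exp (-t ^ 2)| ≤ Real.sqrt π := by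
    rcases le_total 0 x with h | h
    · exact key 0 x h
    · rw [intervalIntegral.integral_symm, abs_neg]
      exact key x 0 h
  have : |erf x| = (2 / Real.sqrt π) * |∫ t in (0:ℝ)..x, Real.exp (-t ^ 2)| := by
    rw [erf, abs_mul, abs_of_nonneg (by positivity : (0:ℝ) ≤ 2 / Real.sqrt π)]
  rw [this]
  calc (2 / Real.sqrt π) * |∫ t in (0:ℝ)..x, Real.exp (-t ^ 2)|
      ≤ (2 / Real.sqrt π) * Real.sqrt π := by gcongr
    _ = 2 := by field_simp

lemma erfc_eq_Ioi {x : ℝ} (hx : 0 ≤ x) :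
    erfc x = (2 / Real.sqrt π) * ∫ t in Set.Ioi x, Real.exp (-t ^ 2) := by
  have h1 : (∫ t in Set.Ioc 0 x, Real.exp (-t ^ 2)) + ∫ t in Set.Ioi x, Real.exp (-t ^ 2)
      = Real.sqrt π / 2 := by
    rw [← setIntegral_union (Ioc_disjoint_Ioi le_rfl) measurableSet_Ioi
      gauss_integrable.integrableOn gauss_integrable.integrableOn,
      Set.Ioc_union_Ioi_eq_Ioi hx, gauss_Ioi]
  rw [erfc, erf, intervalIntegral.integral_of_le hx]
  have hA : (∫ t in Set.Ioc 0 x, Real.exp (-t ^ 2))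
      = Real.sqrt π / 2 - ∫ t in Set.Ioi x, Real.exp (-t ^ 2) := by linarith
  rw [hA]
  have hπ : Real.sqrt π ≠ 0 := sqrt_pi_pos.ne'
  field_simp
  ring

lemma erfc_nonneg {x : ℝ} (hx : 0 ≤ x) : 0 ≤ erfc x := by
  rw [erfc_eq_Ioi hx]
  exact mul_nonneg (by positivity) (setIntegral_nonneg measurableSet_Ioi fun t _ => (exp_pos _).le)

lemma erfc_le {x : ℝ} (hx : 0 ≤ x) : erfc x ≤ 2 * Real.exp (-x ^ 2) := by
  rw [erfc_eq_Ioi hx]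
  have hint : Integrable fun t : ℝ => Real.exp (-x ^ 2) * Real.exp (-(t - x) ^ 2) :=
    ((gauss_integrable.comp_sub_right x).const_mul _)
  have key : (∫ t in Set.Ioi x, Real.exp (-t ^ 2)) ≤ Real.exp (-x ^ 2) * Real.sqrt π := by
    calc (∫ t in Set.Ioi x, Real.exp (-t ^ 2))
        ≤ ∫ t in Set.Ioi x, Real.exp (-x ^ 2) * Real.exp (-(t - x) ^ 2) := by
          apply setIntegral_mono_on gauss_integrable.integrableOn hint.integrableOn
            measurableSet_Ioi
          intro t ht
          rw [← Real.exp_add]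
          apply Real.exp_le_exp.mpr
          nlinarith [ht.out, hx]
      _ ≤ ∫ t : ℝ, Real.exp (-x ^ 2) * Real.exp (-(t - x) ^ 2) :=
          setIntegral_le_integral hint (Eventually.of_forall fun t => by positivity)
      _ = Real.exp (-x ^ 2) * ∫ t : ℝ, Real.exp (-(t - x) ^ 2) := integral_const_mul _ _
      _ = Real.exp (-x ^ 2) * Real.sqrt π := by
          rw [integral_sub_right_eq_self (fun t => Real.exp (-t ^ 2)) x, gauss_total]
  calc (2 / Real.sqrt π) * ∫ t in Set.Ioi x, Real.exp (-t ^ 2)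
      ≤ (2 / Real.sqrt π) * (Real.exp (-x ^ 2) * Real.sqrt π) := by
        gcongr
      _ = 2 * Real.exp (-x ^ 2) := by field_simp

lemma erfc_zero : erfc 0 = 1 := by simp [erfc, erf_zero]

lemma continuous_erfc : Continuous erfc := by
  have : erfc = fun y => 1 - erf y := rfl
  rw [this]; exact continuous_const.sub continuous_erf

lemma hasDerivAt_erfc (x : ℝ) :
    HasDerivAt erfc (-((2 / Real.sqrt π) * Real.exp (-x ^ 2))) x := by
  have h : erfc = fun y => 1 - erf y := rfl
  rw [h]
  simpa using (hasDerivAt_erf x).const_sub 1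

lemma sq_sqrt_two_mul (v : ℝ) : (Real.sqrt 2 * v) ^ 2 = 2 * v ^ 2 := by
  rw [mul_pow, Real.sq_sqrt (by norm_num : (0:ℝ) ≤ 2)]

lemma c_le {v : ℝ} (hv : 0 ≤ v) :
    erfc (Real.sqrt 2 * v) * v * Real.exp (v ^ 2) ≤ 2 * (v * Real.exp (-v ^ 2)) := by
  have h1 : erfc (Real.sqrt 2 * v) ≤ 2 * Real.exp (-(Real.sqrt 2 * v) ^ 2) :=
    erfc_le (by positivity)
  have h2 : Real.exp (-(Real.sqrt 2 * v) ^ 2) * Real.exp (v ^ 2) = Real.exp (-v ^ 2) := by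
    rw [← Real.exp_add, sq_sqrt_two_mul]; ring_nf
  calc erfc (Real.sqrt 2 * v) * v * Real.exp (v ^ 2)
      ≤ (2 * Real.exp (-(Real.sqrt 2 * v) ^ 2)) * v * Real.exp (v ^ 2) := by
        have := Real.exp_pos (v ^ 2)
        nlinarith [Real.exp_pos (v ^ 2), mul_nonneg hv (Real.exp_pos (v^2)).le]
    _ = 2 * (v * (Real.exp (-(Real.sqrt 2 * v) ^ 2) * Real.exp (v ^ 2))) := by ring
    _ = 2 * (v * Real.exp (-v ^ 2)) := by rw [h2]

lemma c_nonneg {v : ℝ} (hv : 0 ≤ v) :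
    0 ≤ erfc (Real.sqrt 2 * v) * v * Real.exp (v ^ 2) := by
  have := erfc_nonneg (x := Real.sqrt 2 * v) (by positivity)
  positivity

lemma integrable_c_Ioi :
    IntegrableOn (fun v => erfc (Real.sqrt 2 * v) * v * Real.exp (v ^ 2)) (Set.Ioi (0:ℝ)) := by
  have hg : IntegrableOn (fun v : ℝ => 2 * (v * Real.exp (-v ^ 2))) (Set.Ioi (0:ℝ)) := by
    have : Integrable (fun v : ℝ => v * Real.exp (-v ^ 2)) := by
      simpa using integrable_mul_exp_neg_mul_sq one_pos
    exact (this.const_mul 2).integrableOn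
  have hcont : Continuous fun v : ℝ => erfc (Real.sqrt 2 * v) * v * Real.exp (v ^ 2) := by
    exact ((continuous_erfc.comp (continuous_const.mul continuous_id)).mul continuous_id).mul
      (Real.continuous_exp.comp (continuous_pow 2))
  refine Integrable.mono' hg hcont.aestronglyMeasurable.restrict ?_
  filter_upwards [ae_restrict_mem measurableSet_Ioi] with v hv
  rw [Real.norm_eq_abs, abs_of_nonneg (c_nonneg (le_of_lt hv))]
  exact c_le (le_of_lt hv)

lemma exp_neg_sq_tendsto : Tendsto (fun v : ℝ => Real.exp (-v ^ 2)) atTop (𝓝 0) :=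
  Real.tendsto_exp_atBot.comp
    ((tendsto_neg_atTop_atBot).comp (tendsto_pow_atTop (two_ne_zero)))

lemma integral_c_Ioi :
    ∫ v in Set.Ioi (0:ℝ), erfc (Real.sqrt 2 * v) * v * Real.exp (v ^ 2)
      = Real.sqrt 2 / 2 - 1 / 2 := by
  have hderiv : ∀ v ∈ Set.Ici (0:ℝ),
      HasDerivAt (fun v => erfc (Real.sqrt 2 * v) * Real.exp (v ^ 2) / 2
        + Real.sqrt 2 / 2 * erf v)
        (erfc (Real.sqrt 2 * v) * v * Real.exp (v ^ 2)) v := by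
    intro v _
    have hlin : HasDerivAt (fun y : ℝ => Real.sqrt 2 * y) (Real.sqrt 2) v := by
      simpa using (hasDerivAt_id v).const_mul (Real.sqrt 2)
    have h1 : HasDerivAt (fun y : ℝ => erfc (Real.sqrt 2 * y))
        (-((2 / Real.sqrt π) * Real.exp (-(Real.sqrt 2 * v) ^ 2)) * Real.sqrt 2) v :=
      (hasDerivAt_erfc (Real.sqrt 2 * v)).comp v hlin
    have h2 : HasDerivAt (fun y : ℝ => Real.exp (y ^ 2))
        (Real.exp (v ^ 2) * (2 * v)) v := by
      simpa using (hasDerivAt_pow 2 v).exp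
    have h3 := hasDerivAt_erf v
    have h := ((h1.mul h2).div_const 2).add (h3.const_mul (Real.sqrt 2 / 2))
    refine h.congr_deriv ?_
    have hexp : Real.exp (-(Real.sqrt 2 * v) ^ 2) * Real.exp (v ^ 2) = Real.exp (-v ^ 2) := by
      rw [← Real.exp_add, sq_sqrt_two_mul]; ring_nf
    linear_combination (-(Real.sqrt 2 / Real.sqrt π)) * hexp
  have htend : Tendsto (fun v => erfc (Real.sqrt 2 * v) * Real.exp (v ^ 2) / 2
      + Real.sqrt 2 / 2 * erf v) atTop (𝓝 (0 + Real.sqrt 2 / 2 * 1)) := by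
    refine Tendsto.add ?_ (erf_tendsto_one.const_mul _)
    refine tendsto_of_tendsto_of_tendsto_of_le_of_le' tendsto_const_nhds
      exp_neg_sq_tendsto ?_ ?_
    · filter_upwards [eventually_ge_atTop (0:ℝ)] with v hv
      have := erfc_nonneg (x := Real.sqrt 2 * v) (by positivity)
      positivity
    · filter_upwards [eventually_ge_atTop (0:ℝ)] with v hv
      have h1 : erfc (Real.sqrt 2 * v) ≤ 2 * Real.exp (-(Real.sqrt 2 * v) ^ 2) :=
        erfc_le (by positivity)
      have hexp : Real.exp (-(Real.sqrt 2 * v) ^ 2) * Real.exp (v ^ 2) = Real.exp (-v ^ 2) := by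
        rw [← Real.exp_add, sq_sqrt_two_mul]; ring_nf
      nlinarith [Real.exp_pos (v ^ 2), Real.exp_pos (-(Real.sqrt 2 * v) ^ 2)]
  have := integral_Ioi_of_hasDerivAt_of_tendsto'
    (f := fun v => erfc (Real.sqrt 2 * v) * Real.exp (v ^ 2) / 2 + Real.sqrt 2 / 2 * erf v)
    hderiv integrable_c_Ioi htend
  rw [this]
  simp [erfc_zero, erf_zero]

section Main

/-- `c v` : the prefactor. -/
noncomputable def cc (v : ℝ) : ℝ := erfc (Real.sqrt 2 * v) * v * Real.exp (v ^ 2)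

/-- `BB R v` : the bracket. -/
noncomputable def BB (R v : ℝ) : ℝ :=
  Real.exp (-(Real.sqrt (R ^ 2 - v ^ 2) - R) ^ 2)
    - Real.exp (-(Real.sqrt (R ^ 2 - v ^ 2) + R) ^ 2)
    + Real.sqrt π * (Real.sqrt (R ^ 2 - v ^ 2) - R) * erf (Real.sqrt (R ^ 2 - v ^ 2) - R)
    - Real.sqrt π * (Real.sqrt (R ^ 2 - v ^ 2) + R) * erf (Real.sqrt (R ^ 2 - v ^ 2) + R)

lemma covGinOE_eq (R : ℝ) : covGinOE R = (2 / π) * ∫ v in (0:ℝ)..R, cc v * BB R v := rfl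

lemma continuous_cc : Continuous cc :=
  ((continuous_erfc.comp (continuous_const.mul continuous_id)).mul continuous_id).mul
    (Real.continuous_exp.comp (continuous_pow 2))

lemma continuous_BB (R : ℝ) : Continuous (BB R) := by
  have ha : Continuous fun v : ℝ => Real.sqrt (R ^ 2 - v ^ 2) :=
    Real.continuous_sqrt.comp (continuous_const.sub (continuous_pow 2))
  have h1 : Continuous fun v : ℝ => Real.sqrt (R ^ 2 - v ^ 2) - R := ha.sub continuous_const
  have h2 : Continuous fun v : ℝ => Real.sqrt (R ^ 2 - v ^ 2) + R := ha.add continuous_const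
  have e1 : Continuous fun v : ℝ => Real.exp (-(Real.sqrt (R ^ 2 - v ^ 2) - R) ^ 2) :=
    Real.continuous_exp.comp (h1.pow 2).neg
  have e2 : Continuous fun v : ℝ => Real.exp (-(Real.sqrt (R ^ 2 - v ^ 2) + R) ^ 2) :=
    Real.continuous_exp.comp (h2.pow 2).neg
  have e3 : Continuous fun v : ℝ =>
      Real.sqrt π * (Real.sqrt (R ^ 2 - v ^ 2) - R) * erf (Real.sqrt (R ^ 2 - v ^ 2) - R) :=
    (continuous_const.mul h1).mul (continuous_erf.comp h1)
  have e4 : Continuous fun v : ℝ =>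
      Real.sqrt π * (Real.sqrt (R ^ 2 - v ^ 2) + R) * erf (Real.sqrt (R ^ 2 - v ^ 2) + R) :=
    (continuous_const.mul h2).mul (continuous_erf.comp h2)
  exact ((e1.sub e2).add e3).sub e4

end Main

noncomputable def bound (v : ℝ) : ℝ :=
  (2 + 8 * Real.sqrt π) * |v * Real.exp (-v ^ 2)| + 4 * Real.sqrt π * |v ^ 3 * Real.exp (-v ^ 2)|

lemma bound_nonneg (v : ℝ) : 0 ≤ bound v := by
  unfold bound; positivity

lemma integrable_cube : Integrable (fun x : ℝ => x ^ 3 * Real.exp (-x ^ 2)) := by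
  have h := integrable_rpow_mul_exp_neg_mul_sq (b := 1) one_pos (s := 3) (by norm_num)
  refine h.congr (Eventually.of_forall fun x => ?_)
  show x ^ (3:ℝ) * Real.exp (-1 * x ^ 2) = x ^ (3:ℕ) * Real.exp (-x ^ 2)
  rw [← Real.rpow_natCast x 3]
  norm_num

lemma integrable_bound : Integrable bound := by
  have h1 : Integrable (fun v : ℝ => v * Real.exp (-v ^ 2)) := by
    simpa using integrable_mul_exp_neg_mul_sq one_pos
  exact ((h1.abs.const_mul _).add (integrable_cube.abs.const_mul _))

lemma BB_abs_le {R v : ℝ} (hR : 1 ≤ R) (hv0 : 0 < v) (hvR : v ≤ R) :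
    |BB R v| ≤ R * (1 + 4 * Real.sqrt π + 2 * Real.sqrt π * v ^ 2) := by
  set a := Real.sqrt (R ^ 2 - v ^ 2) with ha
  have hR0 : (0:ℝ) < R := lt_of_lt_of_le one_pos hR
  have hsub : (0:ℝ) ≤ R ^ 2 - v ^ 2 := by nlinarith
  have ha0 : 0 ≤ a := Real.sqrt_nonneg _
  have haR : a ≤ R := by
    rw [ha]
    calc Real.sqrt (R ^ 2 - v ^ 2) ≤ Real.sqrt (R ^ 2) := Real.sqrt_le_sqrt (by nlinarith)
      _ = R := Real.sqrt_sq hR0.le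
  have hasq : a ^ 2 = R ^ 2 - v ^ 2 := Real.sq_sqrt hsub
  have hRa : R - a ≤ v ^ 2 := by nlinarith
  have he1 : Real.exp (-(a - R) ^ 2) ≤ 1 := Real.exp_le_one_iff.mpr (neg_nonpos.mpr (sq_nonneg _))
  have he2 : Real.exp (-(a + R) ^ 2) ≤ 1 := Real.exp_le_one_iff.mpr (neg_nonpos.mpr (sq_nonneg _))
  have he1p := Real.exp_pos (-(a - R) ^ 2)
  have he2p := Real.exp_pos (-(a + R) ^ 2)
  have hB1 : |Real.exp (-(a - R) ^ 2) - Real.exp (-(a + R) ^ 2)| ≤ 1 := by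
    rw [abs_sub_le_iff]; constructor <;> linarith
  have herf1 := abs_erf_le_two (a - R)
  have herf2 := abs_erf_le_two (a + R)
  have h2 : |Real.sqrt π * (a - R) * erf (a - R)| ≤ Real.sqrt π * (R - a) * 2 := by
    rw [abs_mul, abs_mul, abs_of_nonneg sqrt_pi_pos.le, abs_of_nonpos (by linarith : a - R ≤ 0),
      neg_sub]
    have h0 : 0 ≤ Real.sqrt π * (R - a) := by
      have : 0 ≤ R - a := by linarith
      positivity
    exact mul_le_mul_of_nonneg_left herf1 h0
  have h3 : |Real.sqrt π * (a + R) * erf (a + R)| ≤ Real.sqrt π * (2 * R) * 2 := by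
    rw [abs_mul, abs_mul, abs_of_nonneg sqrt_pi_pos.le, abs_of_nonneg (by linarith : 0 ≤ a + R)]
    have h0 : Real.sqrt π * (a + R) ≤ Real.sqrt π * (2 * R) :=
      mul_le_mul_of_nonneg_left (by linarith) sqrt_pi_pos.le
    calc Real.sqrt π * (a + R) * |erf (a + R)| ≤ Real.sqrt π * (a + R) * 2 := by
          have : 0 ≤ Real.sqrt π * (a + R) := by positivity
          exact mul_le_mul_of_nonneg_left herf2 this
      _ ≤ Real.sqrt π * (2 * R) * 2 := by linarith
  have hb1 := abs_le.mp hB1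
  have hb2 := abs_le.mp h2
  have hb3 := abs_le.mp h3
  have hsp := sqrt_pi_pos.le
  have hv2R : Real.sqrt π * (R - a) ≤ Real.sqrt π * v ^ 2 :=
    mul_le_mul_of_nonneg_left hRa hsp
  have hv2Rmul : Real.sqrt π * v ^ 2 ≤ Real.sqrt π * v ^ 2 * R := by
    nlinarith [mul_nonneg hsp (sq_nonneg v)]
  rw [BB, ← ha, abs_le]
  constructor <;> nlinarith [mul_nonneg hsp (sq_nonneg v)]

lemma sqrt_sub_tendsto (v : ℝ) :
    Tendsto (fun R : ℝ => Real.sqrt (R ^ 2 - v ^ 2) - R) atTop (𝓝 0) := by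
  have hlow : Tendsto (fun R : ℝ => -(v ^ 2 / R)) atTop (𝓝 0) := by
    simpa using (tendsto_const_nhds.div_atTop (tendsto_id (α := ℝ)) :
      Tendsto (fun R : ℝ => v ^ 2 / R) atTop (𝓝 0)).neg
  refine tendsto_of_tendsto_of_tendsto_of_le_of_le' hlow tendsto_const_nhds ?_ ?_
  · filter_upwards [eventually_ge_atTop (max |v| 1)] with R hR
    have hR1 : (1:ℝ) ≤ R := le_trans (le_max_right _ _) hR
    have hRv : |v| ≤ R := le_trans (le_max_left _ _) hR
    have hR0 : (0:ℝ) < R := lt_of_lt_of_le one_pos hR1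
    have hv2 : v ^ 2 ≤ R ^ 2 := by nlinarith [abs_nonneg v, sq_abs v]
    set a := Real.sqrt (R ^ 2 - v ^ 2) with ha
    have ha0 : 0 ≤ a := Real.sqrt_nonneg _
    have hasq : a ^ 2 = R ^ 2 - v ^ 2 := Real.sq_sqrt (by nlinarith)
    have key : (R - a) * R ≤ v ^ 2 := by nlinarith
    have : R - a ≤ v ^ 2 / R := (le_div_iff₀ hR0).mpr key
    linarith
  · filter_upwards [eventually_ge_atTop (max |v| 1)] with R hR
    have hR1 : (1:ℝ) ≤ R := le_trans (le_max_right _ _) hR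
    have hRv : |v| ≤ R := le_trans (le_max_left _ _) hR
    have hR0 : (0:ℝ) < R := lt_of_lt_of_le one_pos hR1
    have hv2 : v ^ 2 ≤ R ^ 2 := by nlinarith [abs_nonneg v, sq_abs v]
    have : Real.sqrt (R ^ 2 - v ^ 2) ≤ R := by
      calc Real.sqrt (R ^ 2 - v ^ 2) ≤ Real.sqrt (R ^ 2) := Real.sqrt_le_sqrt (by nlinarith)
        _ = R := Real.sqrt_sq hR0.le
    linarith

lemma sqrt_add_tendsto (v : ℝ) :
    Tendsto (fun R : ℝ => Real.sqrt (R ^ 2 - v ^ 2) + R) atTop atTop :=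
  tendsto_atTop_mono (fun R => le_add_of_nonneg_left (Real.sqrt_nonneg _)) tendsto_id

lemma ratio_tendsto (v : ℝ) :
    Tendsto (fun R : ℝ => (Real.sqrt (R ^ 2 - v ^ 2) + R) / R) atTop (𝓝 2) := by
  have h1 : Tendsto (fun R : ℝ => Real.sqrt (R ^ 2 - v ^ 2) / R) atTop (𝓝 1) := by
    have hin : Tendsto (fun R : ℝ => 1 - (v / R) ^ 2) atTop (𝓝 1) := by
      have : Tendsto (fun R : ℝ => (v / R) ^ 2) atTop (𝓝 0) := by
        simpa using (tendsto_const_nhds.div_atTop (tendsto_id (α := ℝ)) :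
          Tendsto (fun R : ℝ => v / R) atTop (𝓝 0)).pow 2
      simpa using (tendsto_const_nhds (x := (1:ℝ))).sub this
    have hlim : Tendsto (fun R : ℝ => Real.sqrt (1 - (v / R) ^ 2)) atTop (𝓝 1) := by
      have := (Real.continuous_sqrt.tendsto 1).comp hin
      simpa [Function.comp_def] using this
    refine hlim.congr' ?_
    filter_upwards [eventually_ge_atTop (max |v| 1)] with R hR
    have hR1 : (1:ℝ) ≤ R := le_trans (le_max_right _ _) hR
    have hRv : |v| ≤ R := le_trans (le_max_left _ _) hR
    have hR0 : (0:ℝ) < R := lt_of_lt_of_le one_pos hR1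
    have hv2 : v ^ 2 ≤ R ^ 2 := by nlinarith [abs_nonneg v, sq_abs v]
    have heq : 1 - (v / R) ^ 2 = (R ^ 2 - v ^ 2) / R ^ 2 := by
      field_simp
    rw [heq, Real.sqrt_div (by nlinarith) (R ^ 2), Real.sqrt_sq hR0.le]
  have h2 : Tendsto (fun R : ℝ => Real.sqrt (R ^ 2 - v ^ 2) / R + R / R) atTop (𝓝 2) := by
    have hRR : Tendsto (fun R : ℝ => R / R) atTop (𝓝 1) := by
      refine (tendsto_const_nhds (x := (1:ℝ))).congr' ?_
      filter_upwards [eventually_gt_atTop (0:ℝ)] with R hR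
      rw [div_self hR.ne']
    have := h1.add hRR
    norm_num at this
    exact this
  refine h2.congr (fun R => ?_)
  ring

lemma BB_div_tendsto {v : ℝ} (hv : 0 < v) :
    Tendsto (fun R => BB R v / R) atTop (𝓝 (-2 * Real.sqrt π)) := by
  have T1 := sqrt_sub_tendsto v
  have T2 := sqrt_add_tendsto v
  have Te1 : Tendsto (fun R : ℝ => Real.exp (-(Real.sqrt (R ^ 2 - v ^ 2) - R) ^ 2))
      atTop (𝓝 1) := by
    have h0 : Tendsto (fun R : ℝ => -(Real.sqrt (R ^ 2 - v ^ 2) - R) ^ 2) atTop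
        (𝓝 (-(0:ℝ) ^ 2)) := (T1.pow 2).neg
    have := (Real.continuous_exp.tendsto _).comp h0
    simpa [Function.comp_def] using this
  have Te2 : Tendsto (fun R : ℝ => Real.exp (-(Real.sqrt (R ^ 2 - v ^ 2) + R) ^ 2))
      atTop (𝓝 0) := by
    have hsq : Tendsto (fun R : ℝ => (Real.sqrt (R ^ 2 - v ^ 2) + R) ^ 2) atTop atTop := by
      refine (T2.atTop_mul_atTop₀ T2).congr fun R => ?_
      ring
    exact Real.tendsto_exp_atBot.comp (tendsto_neg_atTop_atBot.comp hsq)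
  have Terf0 : Tendsto (fun R : ℝ => erf (Real.sqrt (R ^ 2 - v ^ 2) - R)) atTop (𝓝 0) := by
    have := (continuous_erf.tendsto 0).comp T1
    simpa [erf_zero, Function.comp_def] using this
  have Terf1 : Tendsto (fun R : ℝ => erf (Real.sqrt (R ^ 2 - v ^ 2) + R)) atTop (𝓝 1) :=
    erf_tendsto_one.comp T2
  have Tr := ratio_tendsto v
  have Tterm1 : Tendsto (fun R : ℝ =>
      (Real.exp (-(Real.sqrt (R ^ 2 - v ^ 2) - R) ^ 2)
        - Real.exp (-(Real.sqrt (R ^ 2 - v ^ 2) + R) ^ 2)) / R) atTop (𝓝 0) :=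
    (Te1.sub Te2).div_atTop tendsto_id
  have Tterm2 : Tendsto (fun R : ℝ =>
      Real.sqrt π * (Real.sqrt (R ^ 2 - v ^ 2) - R) * erf (Real.sqrt (R ^ 2 - v ^ 2) - R) / R)
      atTop (𝓝 0) := by
    have h := ((T1.const_mul (Real.sqrt π)).mul Terf0).div_atTop (tendsto_id (α := ℝ))
    simpa using h
  have Tterm3 : Tendsto (fun R : ℝ =>
      Real.sqrt π * ((Real.sqrt (R ^ 2 - v ^ 2) + R) / R) * erf (Real.sqrt (R ^ 2 - v ^ 2) + R))
      atTop (𝓝 (Real.sqrt π * 2 * 1)) := (Tr.const_mul _).mul Terf1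
  have hcomb := (Tterm1.add Tterm2).sub Tterm3
  have heq : ∀ R : ℝ, BB R v / R =
      (Real.exp (-(Real.sqrt (R ^ 2 - v ^ 2) - R) ^ 2)
        - Real.exp (-(Real.sqrt (R ^ 2 - v ^ 2) + R) ^ 2)) / R
      + Real.sqrt π * (Real.sqrt (R ^ 2 - v ^ 2) - R) * erf (Real.sqrt (R ^ 2 - v ^ 2) - R) / R
      - Real.sqrt π * ((Real.sqrt (R ^ 2 - v ^ 2) + R) / R)
          * erf (Real.sqrt (R ^ 2 - v ^ 2) + R) := by
    intro R
    rw [BB]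
    ring
  have := hcomb.congr (fun R => (heq R).symm)
  convert this using 2
  ring

theorem covariance_GinOE_asymptotics :
    Tendsto (fun R : ℝ => covGinOE R / R) atTop
      (nhds (-(2 * Real.sqrt 2 - 2) / Real.sqrt π)) := by
  have hmeas : ∀ᶠ R in (atTop : Filter ℝ), AEStronglyMeasurable
      ((Set.Ioc (0:ℝ) R).indicator (fun v => cc v * BB R v / R)) volume :=
    Eventually.of_forall fun R =>
      (((continuous_cc.mul (continuous_BB R)).div_const R).aestronglyMeasurable).indicator
        measurableSet_Ioc
  have hbound : ∀ᶠ R in (atTop : Filter ℝ), ∀ᵐ v : ℝ,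
      ‖(Set.Ioc (0:ℝ) R).indicator (fun v => cc v * BB R v / R) v‖ ≤ bound v := by
    filter_upwards [eventually_ge_atTop (1:ℝ)] with R hR
    refine Eventually.of_forall fun v => ?_
    by_cases hv : v ∈ Set.Ioc (0:ℝ) R
    · rw [Set.indicator_of_mem hv]
      obtain ⟨hv0, hvR⟩ := hv
      have hR0 : (0:ℝ) < R := lt_of_lt_of_le one_pos hR
      have habs := BB_abs_le hR hv0 hvR
      have hcv : 0 ≤ cc v := c_nonneg hv0.le
      have hcle : cc v ≤ 2 * (v * Real.exp (-v ^ 2)) := c_le hv0.le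
      have hM : (0:ℝ) ≤ 1 + 4 * Real.sqrt π + 2 * Real.sqrt π * v ^ 2 := by positivity
      rw [Real.norm_eq_abs, abs_div, abs_mul, abs_of_nonneg hcv, abs_of_pos hR0]
      calc cc v * |BB R v| / R
          ≤ cc v * (R * (1 + 4 * Real.sqrt π + 2 * Real.sqrt π * v ^ 2)) / R :=
            (div_le_div_iff_of_pos_right hR0).mpr (mul_le_mul_of_nonneg_left habs hcv)
        _ = cc v * (1 + 4 * Real.sqrt π + 2 * Real.sqrt π * v ^ 2) := by
            field_simp
        _ ≤ 2 * (v * Real.exp (-v ^ 2)) * (1 + 4 * Real.sqrt π + 2 * Real.sqrt π * v ^ 2) :=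
            mul_le_mul_of_nonneg_right hcle hM
        _ ≤ bound v := by
            unfold bound
            rw [abs_of_nonneg (mul_nonneg hv0.le (Real.exp_pos _).le),
              abs_of_nonneg (mul_nonneg (by positivity) (Real.exp_pos _).le)]
            nlinarith [mul_nonneg hv0.le (Real.exp_pos (-v ^ 2)).le, sqrt_pi_pos.le,
              mul_nonneg (mul_nonneg (pow_nonneg hv0.le 3) (Real.exp_pos (-v ^ 2)).le)
                sqrt_pi_pos.le]
    · rw [Set.indicator_of_notMem hv, norm_zero]
      exact bound_nonneg v
  have hlim : ∀ᵐ v : ℝ, Tendsto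
      (fun R => (Set.Ioc (0:ℝ) R).indicator (fun v => cc v * BB R v / R) v) atTop
      (𝓝 ((Set.Ioi (0:ℝ)).indicator (fun v => -2 * Real.sqrt π * cc v) v)) := by
    refine Eventually.of_forall fun v => ?_
    rcases le_or_gt v 0 with hv | hv
    · have h0 : ∀ R : ℝ, (Set.Ioc (0:ℝ) R).indicator (fun v => cc v * BB R v / R) v = 0 :=
        fun R => Set.indicator_of_notMem (fun h => absurd h.1 (not_lt.mpr hv)) _
      rw [Set.indicator_of_notMem (by simpa using hv)]
      simp only [h0]
      exact tendsto_const_nhds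
    · rw [Set.indicator_of_mem (Set.mem_Ioi.mpr hv)]
      have h := (BB_div_tendsto hv).const_mul (cc v)
      have hval : cc v * (-2 * Real.sqrt π) = -2 * Real.sqrt π * cc v := by ring
      rw [hval] at h
      refine h.congr' ?_
      filter_upwards [eventually_ge_atTop v] with R hRv
      rw [Set.indicator_of_mem (Set.mem_Ioc.mpr ⟨hv, hRv⟩)]
      ring
  have key := tendsto_integral_filter_of_dominated_convergence
    (μ := volume) bound hmeas hbound integrable_bound hlim
  have hLval : (∫ v : ℝ, (Set.Ioi (0:ℝ)).indicator (fun v => -2 * Real.sqrt π * cc v) v)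
      = -2 * Real.sqrt π * (Real.sqrt 2 / 2 - 1 / 2) := by
    rw [integral_indicator measurableSet_Ioi, integral_const_mul]
    simp only [cc]
    rw [integral_c_Ioi]
  rw [hLval] at key
  have hmain := key.const_mul (2 / π)
  have hval2 : (2 / π) * (-2 * Real.sqrt π * (Real.sqrt 2 / 2 - 1 / 2))
      = -(2 * Real.sqrt 2 - 2) / Real.sqrt π := by
    have hππ : Real.sqrt π * Real.sqrt π = π := Real.mul_self_sqrt pi_pos.le
    have hπ0 : (π:ℝ) ≠ 0 := pi_ne_zero
    have hsπ : Real.sqrt π ≠ 0 := sqrt_pi_pos.ne'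
    have key : (2 / π) * (-2 * Real.sqrt π * (Real.sqrt 2 / 2 - 1 / 2))
        = -(2 * Real.sqrt 2 - 2) * Real.sqrt π / π := by ring
    rw [key, div_eq_div_iff hπ0 hsπ]
    linear_combination (-(2 * Real.sqrt 2 - 2)) * hππ
  rw [hval2] at hmain
  refine hmain.congr' ?_
  filter_upwards [eventually_ge_atTop (1:ℝ)] with R hR
  have hR0 : (0:ℝ) ≤ R := le_trans zero_le_one hR
  have h1 : (∫ v : ℝ, (Set.Ioc (0:ℝ) R).indicator (fun v => cc v * BB R v / R) v)
      = (∫ v in Set.Ioc (0:ℝ) R, cc v * BB R v) / R := by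
    rw [integral_indicator measurableSet_Ioc, integral_div]
  rw [h1, covGinOE_eq, intervalIntegral.integral_of_le hR0]
  ring
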